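/- Moving a single monomer m from polymer p₁ to polymer p₂ by breaking all of m's binding edges in p₁ and forming an equal number of binding edges with monomers of p₂ leaves the enthalpy unchanged and changes the entropy by at most 1 in absolute value, provided p₁ remains connected after removing m. -/
import Mathlib


/-- Moving a single monomer `m` from polymer `p₁` to polymer `p₂` by
breaking all of `m`'s binding edges (all lying inside `p₁`, the component of `m` in `β`)
and forming an equal number of binding edges with monomers of a different polymer `p₂`
leaves the enthalpy (number of binding edges) unchanged, and changes the entropy (number
of connected components) by at most `1` in absolute value, provided `p₁` remains
connected after removing `m`. -/
theorem tbn_move_monomer_enthalpy_entropy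
    {V : Type*} [Fintype V] [DecidableEq V]
    (Gβ Gα : SimpleGraph V) [DecidableRel Gβ.Adj] [DecidableRel Gα.Adj]
    [Fintype Gβ.ConnectedComponent] [Fintype Gα.ConnectedComponent]
    (m : V)
    -- away from m the two configurations agree
    (hsame : ∀ x y : V, x ≠ m → y ≠ m → (Gα.Adj x y ↔ Gβ.Adj x y))
    -- the number k of broken edges equals the number of new edges
    (hk : (Gβ.neighborFinset m).card = (Gα.neighborFinset m).card)
    -- all new edges go to monomers of a single polymer p₂ of β, different from m's polymer p₁
    (hp₂ : ∃ p₂ : Gβ.ConnectedComponent, p₂ ≠ Gβ.connectedComponentMk m ∧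
      ∀ x : V, Gα.Adj m x → Gβ.connectedComponentMk x = p₂)
    -- p₁ remains connected after removing m
    (hconn : (Gβ.induce {x : V | Gβ.connectedComponentMk x = Gβ.connectedComponentMk m ∧ x ≠ m}).Preconnected) :
    Gα.edgeFinset.card = Gβ.edgeFinset.card ∧
    |(Fintype.card Gα.ConnectedComponent : ℤ) - (Fintype.card Gβ.ConnectedComponent : ℤ)| ≤ 1 := by
  classical
  obtain ⟨p₂, hp₂ne, hp₂mem⟩ := hp₂
  -- Enthalpy part
  have hedge : Gα.edgeFinset.card = Gβ.edgeFinset.card := by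
    have hsplit : ∀ (G : SimpleGraph V) [DecidableRel G.Adj],
        G.edgeFinset.card
          = (G.edgeFinset.filter (fun e => m ∈ e)).card
            + (G.edgeFinset.filter (fun e => ¬ m ∈ e)).card := by
      intro G _
      exact (Finset.card_filter_add_card_filter_not (fun e => m ∈ e)).symm
    have hinc : ∀ (G : SimpleGraph V) [DecidableRel G.Adj],
        (G.edgeFinset.filter (fun e => m ∈ e)).card = (G.neighborFinset m).card := by
      intro G _
      rw [← SimpleGraph.incidenceFinset_eq_filter, SimpleGraph.card_incidenceFinset_eq_degree]
      rfl
    have hrest : Gα.edgeFinset.filter (fun e => ¬ m ∈ e)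
        = Gβ.edgeFinset.filter (fun e => ¬ m ∈ e) := by
      ext e
      induction e with
      | h x y =>
        simp only [Finset.mem_filter, SimpleGraph.mem_edgeFinset, SimpleGraph.mem_edgeSet,
          Sym2.mem_iff, not_or]
        constructor
        · rintro ⟨h, hx, hy⟩
          exact ⟨(hsame x y (fun h' => hx h'.symm) (fun h' => hy h'.symm)).mp h, hx, hy⟩
        · rintro ⟨h, hx, hy⟩
          exact ⟨(hsame x y (fun h' => hx h'.symm) (fun h' => hy h'.symm)).mpr h, hx, hy⟩
    rw [hsplit Gα, hsplit Gβ, hinc Gα, hinc Gβ, hrest, hk]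
  refine ⟨hedge, ?_⟩
  -- walks in Gβ avoiding m transfer to Gα
  have walkβα : ∀ x y (w : Gβ.Walk x y), m ∉ w.support → Gα.Reachable x y := by
    intro x y w
    induction w with
    | nil => intro _; exact SimpleGraph.Reachable.refl _
    | @cons a b c h p ih =>
      intro hm
      rw [SimpleGraph.Walk.support_cons] at hm
      simp only [List.mem_cons, not_or] at hm
      have hb : b ∈ p.support := SimpleGraph.Walk.start_mem_support p
      have hbm : b ≠ m := fun h' => hm.2 (h' ▸ hb)
      exact (SimpleGraph.Adj.reachable
        ((hsame a b (fun h' => hm.1 h'.symm) hbm).mpr h)).trans (ih hm.2)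
  -- β-reachability transfers to α for vertices ≠ m
  have hβα : ∀ x y, x ≠ m → y ≠ m → Gβ.Reachable x y → Gα.Reachable x y := by
    intro x y hx hy hr
    by_cases hc : Gβ.connectedComponentMk x = Gβ.connectedComponentMk m
    · have hcy : Gβ.connectedComponentMk y = Gβ.connectedComponentMk m := by
        rw [← hc]
        exact (SimpleGraph.ConnectedComponent.eq.mpr hr.symm)
      obtain ⟨w⟩ := hconn ⟨x, hc, hx⟩ ⟨y, hcy, hy⟩
      let f : (Gβ.induce {v : V | Gβ.connectedComponentMk v = Gβ.connectedComponentMk m ∧ v ≠ m}) →g Gα :=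
        ⟨fun v => v.1, by
          intro a b hab
          simp only [SimpleGraph.comap_adj, Function.Embedding.coe_subtype] at hab
          exact (hsame a.1 b.1 a.2.2 b.2.2).mpr hab⟩
      exact ⟨w.map f⟩
    · obtain ⟨w⟩ := hr
      have hm : m ∉ w.support := by
        intro hm
        exact hc (SimpleGraph.ConnectedComponent.eq.mpr ⟨w.takeUntil m hm⟩)
      exact walkβα x y w hm
  -- α-reachability transfers to β for vertices ≠ m
  have hαβ' : ∀ x y (w : Gα.Walk x y), y ≠ m →
      ((x ≠ m → Gβ.Reachable x y) ∧ (x = m → Gβ.connectedComponentMk y = p₂)) := by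
    intro x y w
    induction w with
    | nil =>
      intro hy
      exact ⟨fun _ => SimpleGraph.Reachable.refl _, fun hx => absurd hx hy⟩
    | @cons a b c h p ih =>
      intro hy
      by_cases hb : b = m
      · subst hb
        have hcy := (ih hy).2 rfl
        constructor
        · intro hx
          have hca : Gβ.connectedComponentMk a = p₂ := hp₂mem a h.symm
          exact SimpleGraph.ConnectedComponent.eq.mp (hca.trans hcy.symm)
        · intro hx
          subst hx
          exact absurd h (Gα.irrefl)
      · have hcb := (ih hy).1 hb
        constructor
        · intro hx
          exact (SimpleGraph.Adj.reachable ((hsame a b hx hb).mp h)).trans hcb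
        · intro hx
          have : Gβ.connectedComponentMk b = p₂ := hp₂mem b (hx ▸ h)
          rw [← this]
          exact (SimpleGraph.ConnectedComponent.eq.mpr hcb.symm)
  have hαβ : ∀ x y, x ≠ m → y ≠ m → Gα.Reachable x y → Gβ.Reachable x y := by
    intro x y hx hy ⟨w⟩
    exact (hαβ' x y w hy).1 hx
  -- cardinality inequalities
  have hout : ∀ (G : SimpleGraph V) (p : G.ConnectedComponent),
      G.connectedComponentMk p.out = p := fun G p => p.out_eq
  have h1 : Fintype.card Gβ.ConnectedComponent ≤ Fintype.card Gα.ConnectedComponent + 1 := by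
    have hinj : Function.Injective
        (fun p : {p : Gβ.ConnectedComponent // p ≠ Gβ.connectedComponentMk m} =>
          Gα.connectedComponentMk p.1.out) := by
      rintro ⟨p, hp⟩ ⟨q, hq⟩ hpq
      have hrα : Gα.Reachable p.out q.out := SimpleGraph.ConnectedComponent.eq.mp hpq
      have hpm : p.out ≠ m := fun h' => hp (by rw [← hout Gβ p, h'])
      have hqm : q.out ≠ m := fun h' => hq (by rw [← hout Gβ q, h'])
      have hrβ := hαβ _ _ hpm hqm hrα
      have : Gβ.connectedComponentMk p.out = Gβ.connectedComponentMk q.out :=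
        SimpleGraph.ConnectedComponent.eq.mpr hrβ
      rw [hout Gβ p, hout Gβ q] at this
      exact Subtype.ext this
    have hcard := Fintype.card_le_of_injective _ hinj
    have : Fintype.card {p : Gβ.ConnectedComponent // p ≠ Gβ.connectedComponentMk m}
        = Fintype.card Gβ.ConnectedComponent - 1 := by
      rw [Fintype.card_subtype_compl, Fintype.card_subtype_eq]
    omega
  have h2 : Fintype.card Gα.ConnectedComponent ≤ Fintype.card Gβ.ConnectedComponent + 1 := by
    have hinj : Function.Injective
        (fun p : {p : Gα.ConnectedComponent // p ≠ Gα.connectedComponentMk m} =>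
          Gβ.connectedComponentMk p.1.out) := by
      rintro ⟨p, hp⟩ ⟨q, hq⟩ hpq
      have hrβ : Gβ.Reachable p.out q.out := SimpleGraph.ConnectedComponent.eq.mp hpq
      have hpm : p.out ≠ m := fun h' => hp (by rw [← hout Gα p, h'])
      have hqm : q.out ≠ m := fun h' => hq (by rw [← hout Gα q, h'])
      have hrα := hβα _ _ hpm hqm hrβ
      have : Gα.connectedComponentMk p.out = Gα.connectedComponentMk q.out :=
        SimpleGraph.ConnectedComponent.eq.mpr hrα
      rw [hout Gα p, hout Gα q] at this
      exact Subtype.ext this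
    have hcard := Fintype.card_le_of_injective _ hinj
    have : Fintype.card {p : Gα.ConnectedComponent // p ≠ Gα.connectedComponentMk m}
        = Fintype.card Gα.ConnectedComponent - 1 := by
      rw [Fintype.card_subtype_compl, Fintype.card_subtype_eq]
    omega
  rw [abs_le]
  constructor <;> omega
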